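/- Let G = (V,E) be a finite simple undirected graph, ℓ a labeling, v a vertex, and l a label with c_ℓ(v,l) > c_ℓ(v,ℓ(v)). If ℓ' is the labeling that agrees with ℓ on all vertices except that ℓ'(v) = l, then f(ℓ') > f(ℓ): updating a single vertex to a label strictly more frequent among its neighbors than its current label strictly increases the number of monochromatic edges. -/

import Mathlib

/-- The number of neighbors of `v` that carry label `l` under the labeling `ℓ`. -/
def nbrCount {V : Type*} [Fintype V] [DecidableEq V] {L : Type*} [DecidableEq L]
    (G : SimpleGraph V) [DecidableRel G.Adj] (ℓ : V → L) (v : V) (l : L) : ℕ :=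
  ((G.neighborFinset v).filter fun u => ℓ u = l).card

/-- The number of monochromatic edges of `G` under the labeling `ℓ`. -/
def monoCount {V : Type*} [Fintype V] [DecidableEq V] {L : Type*} [DecidableEq L]
    (G : SimpleGraph V) [DecidableRel G.Adj] (ℓ : V → L) : ℕ :=
  (G.edgeFinset.filter fun e =>
      Sym2.lift ⟨fun a b => decide (ℓ a = ℓ b),
        fun a b => decide_eq_decide.mpr eq_comm⟩ e = true).card

namespace SingleUpdateAux

variable {V : Type*} [Fintype V] [DecidableEq V] {L : Type*} [DecidableEq L]
  (G : SimpleGraph V) [DecidableRel G.Adj]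

def monoPred (ℓ : V → L) : Sym2 V → Bool :=
  Sym2.lift ⟨fun a b => decide (ℓ a = ℓ b), fun a b => decide_eq_decide.mpr eq_comm⟩

lemma monoPred_mk (ℓ : V → L) (a b : V) :
    monoPred ℓ s(a, b) = true ↔ ℓ a = ℓ b := by
  simp [monoPred]

lemma card_incident_mono (ℓ : V → L) (v : V) :
    (G.edgeFinset.filter fun e => monoPred ℓ e = true ∧ v ∈ e).card
      = nbrCount G ℓ v (ℓ v) := by
  rw [nbrCount]
  symm
  apply Finset.card_bij (fun u _ => s(v, u))
  · intro u hu
    simp only [Finset.mem_filter, SimpleGraph.mem_neighborFinset] at hu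
    simp only [Finset.mem_filter, SimpleGraph.mem_edgeFinset, SimpleGraph.mem_edgeSet]
    refine ⟨hu.1, ?_, ?_⟩
    · rw [monoPred_mk]; exact hu.2.symm
    · simp
  · intro u1 h1 u2 h2 hh
    have := (Sym2.mk_eq_mk_iff (p := (v, u1)) (q := (v, u2))).mp hh
    simp only [Prod.mk.injEq, Prod.swap_prod_mk] at this
    rcases this with ⟨_, h⟩ | ⟨h1, h2⟩
    · exact h
    · rw [h2, h1]
  · intro e he
    simp only [Finset.mem_filter, SimpleGraph.mem_edgeFinset] at he
    obtain ⟨hadj, hmono, hv⟩ := he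
    induction e using Sym2.inductionOn with
    | hf a b =>
      rw [SimpleGraph.mem_edgeSet] at hadj
      rw [Sym2.mem_iff] at hv
      rw [monoPred_mk] at hmono
      rcases hv with rfl | rfl
      · exact ⟨b, by simp [Finset.mem_filter, SimpleGraph.mem_neighborFinset, hadj, hmono.symm], rfl⟩
      · refine ⟨a, ?_, Sym2.eq_swap⟩
        simp [Finset.mem_filter, SimpleGraph.mem_neighborFinset, hadj.symm, hmono]

lemma monoPred_update_notMem (ℓ : V → L) (v : V) (l : L) (e : Sym2 V) (hv : ¬ v ∈ e) :
    monoPred (Function.update ℓ v l) e = monoPred ℓ e := by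
  induction e using Sym2.inductionOn with
  | hf a b =>
    rw [Sym2.mem_iff] at hv
    push_neg at hv
    simp only [monoPred, Sym2.lift_mk]
    rw [Function.update_of_ne (Ne.symm hv.1), Function.update_of_ne (Ne.symm hv.2)]

end SingleUpdateAux

/-- Updating a single vertex to a label strictly more frequent among its neighbors than
its current label strictly increases the number of monochromatic edges. -/
theorem single_update_strict_increase
    {V : Type*} [Fintype V] [DecidableEq V] {L : Type*} [DecidableEq L]
    (G : SimpleGraph V) [DecidableRel G.Adj] (ℓ : V → L) (v : V) (l : L)
    (h : nbrCount G ℓ v l > nbrCount G ℓ v (ℓ v)) :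
    monoCount G (Function.update ℓ v l) > monoCount G ℓ := by
  open SingleUpdateAux in
  have key : ∀ ℓ' : V → L, monoCount G ℓ' =
      (G.edgeFinset.filter fun e => monoPred ℓ' e = true ∧ v ∈ e).card
      + (G.edgeFinset.filter fun e => monoPred ℓ' e = true ∧ ¬ v ∈ e).card := by
    intro ℓ'
    rw [monoCount,
      ← Finset.card_filter_add_card_filter_not (p := fun e => v ∈ e),
      Finset.filter_filter, Finset.filter_filter]
    rfl
  rw [key ℓ, key (Function.update ℓ v l)]
  have h2 : (G.edgeFinset.filter fun e => monoPred (Function.update ℓ v l) e = true ∧ ¬ v ∈ e)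
      = G.edgeFinset.filter fun e => monoPred ℓ e = true ∧ ¬ v ∈ e := by
    apply Finset.filter_congr
    intro e _
    constructor
    · rintro ⟨hm, hv⟩; exact ⟨(monoPred_update_notMem ℓ v l e hv) ▸ hm, hv⟩
    · rintro ⟨hm, hv⟩; exact ⟨(monoPred_update_notMem ℓ v l e hv).symm ▸ hm, hv⟩
  rw [h2, card_incident_mono G ℓ v, card_incident_mono G (Function.update ℓ v l) v]
  have h3 : nbrCount G (Function.update ℓ v l) v (Function.update ℓ v l v)
      = nbrCount G ℓ v l := by
    rw [Function.update_self, nbrCount, nbrCount]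
    congr 1
    apply Finset.filter_congr
    intro u hu
    rw [SimpleGraph.mem_neighborFinset] at hu
    rw [Function.update_of_ne (G.ne_of_adj hu).symm]
  rw [h3]
  omega
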